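/- A linear variable Z : S → Z' on a symplectic vector space S is measurable in nomic toy theory if and only if Z Ω_S Z^T = 0. That is, there exists a symplectic matrix M on S ⊕ Q ⊕ P (Q = Z' Lagrangian, P complementary) with M_{QP} = 0 and M_{QS} = Z if and only if Z is a Poisson variable. -/

import Mathlib

open Matrix

/-- The standard symplectic form matrix `[[0, 1], [-1, 0]]` on `(ι ⊕ ι) → K`. -/
def stdJ (K : Type*) [Field K] (ι : Type*) [Fintype ι] [DecidableEq ι] :
    Matrix (ι ⊕ ι) (ι ⊕ ι) K :=
  Matrix.fromBlocks 0 1 (-1) 0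

lemma stdJ_sq {K : Type*} [Field K] {ι : Type*} [Fintype ι] [DecidableEq ι] :
    stdJ K ι * stdJ K ι = -1 := by
  simp only [stdJ, Matrix.fromBlocks_multiply]
  ext (i|i) (j|j) <;>
    simp [Matrix.one_apply]

/-- Main theorem of nomic toy theory: a linear variable `Z : S → Q` is measurable
(there is a symplectic matrix `M` on `S ⊕ Q ⊕ P` with `M_{QP} = 0` and
`M_{QS} = Z`) if and only if `Z` is a Poisson variable (`Z Ω_S Zᵀ = 0`). -/
theorem measurable_iff_poisson {K : Type*} [Field K]
    {ιs ιQ : Type*} [Fintype ιs] [DecidableEq ιs] [Fintype ιQ] [DecidableEq ιQ]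
    (Z : Matrix ιQ (ιs ⊕ ιs) K) :
    (∃ M : Matrix ((ιs ⊕ ιs) ⊕ (ιQ ⊕ ιQ)) ((ιs ⊕ ιs) ⊕ (ιQ ⊕ ιQ)) K,
        Mᵀ * Matrix.fromBlocks (stdJ K ιs) 0 0 (stdJ K ιQ) * M =
          Matrix.fromBlocks (stdJ K ιs) 0 0 (stdJ K ιQ) ∧
        (Matrix.of fun (i : ιQ) (j : ιQ) =>
          M (Sum.inr (Sum.inl i)) (Sum.inr (Sum.inr j))) = 0 ∧
        (Matrix.of fun (i : ιQ) (j : ιs ⊕ ιs) =>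
          M (Sum.inr (Sum.inl i)) (Sum.inl j)) = Z)
      ↔ Z * stdJ K ιs * Zᵀ = 0 := by
  set J : Matrix ((ιs ⊕ ιs) ⊕ (ιQ ⊕ ιQ)) ((ιs ⊕ ιs) ⊕ (ιQ ⊕ ιQ)) K :=
    Matrix.fromBlocks (stdJ K ιs) 0 0 (stdJ K ιQ) with hJ
  have hJ2 : J * J = -1 := by
    rw [hJ, Matrix.fromBlocks_multiply]
    simp only [stdJ_sq, Matrix.mul_zero, Matrix.zero_mul, add_zero, zero_add,
      Matrix.zero_mul, Matrix.mul_zero]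
    ext (i|i) (j|j) <;> simp [Matrix.one_apply]
  constructor
  · rintro ⟨M, hsymp, hQP, hQS⟩
    -- From Mᵀ J M = J deduce M J Mᵀ = J
    have h1 : ((-J) * Mᵀ * J) * M = 1 := by
      have e : ((-J) * Mᵀ * J) * M = -J * (Mᵀ * J * M) := by noncomm_ring
      rw [e, hsymp, neg_mul, hJ2, neg_neg]
    have h2 : M * ((-J) * Mᵀ * J) = 1 := mul_eq_one_comm.mp h1
    have hrow : M * J * Mᵀ = J := by
      have h3 : M * ((-J) * Mᵀ * J) * (-J) = 1 * (-J) := by rw [h2]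
      have e : M * ((-J) * Mᵀ * J) * (-J) = M * J * Mᵀ * (J * J) := by noncomm_ring
      rw [e, hJ2] at h3
      simpa using h3
    -- evaluate entries of M J Mᵀ at Q rows
    ext i j
    have he := congrFun (congrFun hrow (Sum.inr (Sum.inl i))) (Sum.inr (Sum.inl j))
    have hz : ∀ k, M (Sum.inr (Sum.inl i)) (Sum.inr (Sum.inr k)) = 0 :=
      fun k => congrFun (congrFun hQP i) k
    have hz' : ∀ k, M (Sum.inr (Sum.inl j)) (Sum.inr (Sum.inr k)) = 0 :=
      fun k => congrFun (congrFun hQP j) k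
    have hzs : ∀ k, M (Sum.inr (Sum.inl i)) (Sum.inl k) = Z i k :=
      fun k => congrFun (congrFun hQS i) k
    have hzs' : ∀ k, M (Sum.inr (Sum.inl j)) (Sum.inl k) = Z j k :=
      fun k => congrFun (congrFun hQS j) k
    simp only [hJ, Matrix.mul_apply, Matrix.transpose_apply, Fintype.sum_sum_type,
      Matrix.fromBlocks_apply₁₁, Matrix.fromBlocks_apply₁₂, Matrix.fromBlocks_apply₂₁,
      Matrix.fromBlocks_apply₂₂, Matrix.zero_apply, mul_zero, zero_mul,
      Finset.sum_const_zero, add_zero, zero_add] at he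
    simp only [stdJ, Fintype.sum_sum_type, Matrix.fromBlocks_apply₁₁,
      Matrix.fromBlocks_apply₁₂, Matrix.fromBlocks_apply₂₁, Matrix.fromBlocks_apply₂₂,
      Matrix.zero_apply, Matrix.neg_apply, Matrix.one_apply, mul_zero, zero_mul,
      Finset.sum_const_zero, add_zero, zero_add, hz, hz', hzs, hzs'] at he
    simp only [Matrix.mul_apply, Matrix.transpose_apply, Matrix.zero_apply, stdJ,
      Fintype.sum_sum_type, Matrix.fromBlocks_apply₁₁, Matrix.fromBlocks_apply₁₂,
      Matrix.fromBlocks_apply₂₁, Matrix.fromBlocks_apply₂₂, Matrix.zero_apply,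
      Matrix.neg_apply, Matrix.one_apply, mul_zero, zero_mul,
      Finset.sum_const_zero, add_zero, zero_add]
    exact he
  · intro hPoisson
    refine ⟨Matrix.fromBlocks 1 (Matrix.fromCols 0 (stdJ K ιs * Zᵀ))
      (Matrix.fromRows Z 0) 1, ?_, ?_, ?_⟩
    · rw [hJ]
      rw [Matrix.fromBlocks_transpose, Matrix.transpose_fromCols, Matrix.transpose_fromRows]
      rw [Matrix.fromBlocks_multiply, Matrix.fromBlocks_multiply]
      simp only [Matrix.transpose_one, Matrix.transpose_zero, Matrix.transpose_mul,
        Matrix.transpose_transpose, Matrix.one_mul, Matrix.mul_one, Matrix.zero_mul,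
        Matrix.mul_zero, add_zero, zero_add]
      have hT : (stdJ K ιs)ᵀ = -(stdJ K ιs) := by
        rw [stdJ, Matrix.fromBlocks_transpose]
        ext (i|i) (j|j) <;> simp
      have c1 : Matrix.fromCols Zᵀ (0 : Matrix (ιs ⊕ ιs) ιQ K) * stdJ K ιQ =
          Matrix.fromCols (0 : Matrix _ ιQ K) Zᵀ := by
        rw [stdJ, Matrix.fromCols_mul_fromBlocks]
        simp
      have c2 : Matrix.fromCols (0 : Matrix (ιs ⊕ ιs) ιQ K) Zᵀ * Matrix.fromRows Z (0 : Matrix ιQ (ιs ⊕ ιs) K) = 0 := by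
        rw [Matrix.fromCols_mul_fromRows]
        simp
      have c3 : stdJ K ιs * Matrix.fromCols (0 : Matrix (ιs ⊕ ιs) ιQ K) (stdJ K ιs * Zᵀ) =
          Matrix.fromCols 0 (-Zᵀ) := by
        rw [Matrix.mul_fromCols, ← Matrix.mul_assoc, stdJ_sq]
        simp
      have c4 : Matrix.fromRows (0 : Matrix ιQ (ιs ⊕ ιs) K) (Z * (stdJ K ιs)ᵀ) * stdJ K ιs =
          Matrix.fromRows 0 Z := by
        rw [Matrix.fromRows_mul, hT]
        simp [Matrix.mul_assoc, stdJ_sq]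
      have c5 : stdJ K ιQ * Matrix.fromRows Z (0 : Matrix ιQ (ιs ⊕ ιs) K) =
          Matrix.fromRows 0 (-Z) := by
        rw [stdJ, Matrix.fromBlocks_mul_fromRows]
        simp
      have c6 : Matrix.fromRows (0 : Matrix ιQ (ιs ⊕ ιs) K) Z *
          Matrix.fromCols (0 : Matrix (ιs ⊕ ιs) ιQ K) (stdJ K ιs * Zᵀ) = 0 := by
        rw [Matrix.fromRows_mul_fromCols, ← Matrix.mul_assoc Z (stdJ K ιs) Zᵀ, hPoisson]
        ext (i|i) (j|j) <;> simp
      rw [c1, c2, c3, c4, c5, c6]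
      ext ((i|i)|(i|i)) ((j|j)|(j|j)) <;>
        simp [Matrix.fromCols, Matrix.fromRows_apply_inl]
    · ext i j
      simp [Matrix.fromBlocks, Matrix.fromCols, Matrix.fromRows]
    · ext i j
      simp [Matrix.fromBlocks, Matrix.fromRows_apply_inl]
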